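/- Let α ≥ 1 and R > 0 be reals, K ≥ 1 a natural number, and a, b, c nonnegative reals. Then (min((a+1)/K, 1)^{1/α} + min((b+1)/K, R)^{1/α} + min((c+1)/K, 1)^{1/α})^α ≤ (3^{α−1}/K)·(a + b + c + 3). -/

import Mathlib

open Finset in
lemma three_pow_bound {x y z α : ℝ} (hx : 0 ≤ x) (hy : 0 ≤ y) (hz : 0 ≤ z)
    (hα : 1 ≤ α) : (x + y + z) ^ α ≤ 3 ^ (α - 1) * (x ^ α + y ^ α + z ^ α) := by
  have h := Real.rpow_arith_mean_le_arith_mean_rpow (univ : Finset (Fin 3))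
    ![1/3, 1/3, 1/3] ![x, y, z]
    (by intro i _; fin_cases i <;> norm_num)
    (by simp [Fin.sum_univ_three]; norm_num)
    (by intro i _; fin_cases i <;> assumption) hα
  simp only [Fin.sum_univ_three, Matrix.cons_val_zero, Matrix.cons_val_one,
    Matrix.head_cons, Matrix.cons_val_two, Matrix.tail_cons] at h
  have hsum : (0:ℝ) ≤ x + y + z := by positivity
  have key : ((x + y + z) / 3) ^ α ≤ (x ^ α + y ^ α + z ^ α) / 3 := by
    calc ((x + y + z) / 3) ^ α = (1/3 * x + 1/3 * y + 1/3 * z) ^ α := by ring_nf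
    _ ≤ 1/3 * x ^ α + 1/3 * y ^ α + 1/3 * z ^ α := h
    _ = (x ^ α + y ^ α + z ^ α) / 3 := by ring
  have h3 : (0:ℝ) < 3 := by norm_num
  calc (x + y + z) ^ α = (3 * ((x + y + z) / 3)) ^ α := by ring_nf
    _ = 3 ^ α * ((x + y + z) / 3) ^ α := Real.mul_rpow (by norm_num) (by positivity)
    _ ≤ 3 ^ α * ((x ^ α + y ^ α + z ^ α) / 3) := by
        exact mul_le_mul_of_nonneg_left key (by positivity)
    _ = 3 ^ (α - 1) * (x ^ α + y ^ α + z ^ α) := by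
        rw [Real.rpow_sub h3, Real.rpow_one]; ring

/-- Per-server power bound in the multi-server proof: for `α ≥ 1`, `R > 0`, `K ≥ 1`,
and nonnegative `a, b, c`,
`(min((a+1)/K, 1)^(1/α) + min((b+1)/K, R)^(1/α) + min((c+1)/K, 1)^(1/α))^α
  ≤ (3^(α-1)/K)·(a+b+c+3)`. -/
theorem stmt_11 (α R : ℝ) (hα : 1 ≤ α) (hR : 0 < R) (K : ℕ) (hK : 1 ≤ K)
    (a b c : ℝ) (ha : 0 ≤ a) (hb : 0 ≤ b) (hc : 0 ≤ c) :
    ((min ((a + 1) / (K : ℝ)) 1) ^ (1 / α) + (min ((b + 1) / (K : ℝ)) R) ^ (1 / α)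
        + (min ((c + 1) / (K : ℝ)) 1) ^ (1 / α)) ^ α
      ≤ ((3 : ℝ) ^ (α - 1) / (K : ℝ)) * (a + b + c + 3) := by
  have hK0 : (0:ℝ) < K := by exact_mod_cast hK
  have hα0 : α ≠ 0 := by linarith
  set mA := min ((a + 1) / (K : ℝ)) 1 with hmA
  set mB := min ((b + 1) / (K : ℝ)) R with hmB
  set mC := min ((c + 1) / (K : ℝ)) 1 with hmC
  have hA0 : 0 ≤ mA := le_min (by positivity) zero_le_one
  have hB0 : 0 ≤ mB := le_min (by positivity) hR.le
  have hC0 : 0 ≤ mC := le_min (by positivity) zero_le_one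
  have hx : 0 ≤ mA ^ (1/α) := Real.rpow_nonneg hA0 _
  have hy : 0 ≤ mB ^ (1/α) := Real.rpow_nonneg hB0 _
  have hz : 0 ≤ mC ^ (1/α) := Real.rpow_nonneg hC0 _
  have e : ∀ m : ℝ, 0 ≤ m → (m ^ (1/α)) ^ α = m := fun m hm => by
    rw [← Real.rpow_mul hm, one_div_mul_cancel hα0, Real.rpow_one]
  calc (mA ^ (1/α) + mB ^ (1/α) + mC ^ (1/α)) ^ α
      ≤ 3 ^ (α - 1) * ((mA ^ (1/α)) ^ α + (mB ^ (1/α)) ^ α + (mC ^ (1/α)) ^ α) :=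
        three_pow_bound hx hy hz hα
    _ = 3 ^ (α - 1) * (mA + mB + mC) := by rw [e mA hA0, e mB hB0, e mC hC0]
    _ ≤ 3 ^ (α - 1) * ((a+1)/K + (b+1)/K + (c+1)/K) := by
        apply mul_le_mul_of_nonneg_left _ (Real.rpow_nonneg (by norm_num) _)
        exact add_le_add (add_le_add (min_le_left _ _) (min_le_left _ _)) (min_le_left _ _)
    _ = ((3 : ℝ) ^ (α - 1) / (K : ℝ)) * (a + b + c + 3) := by
        rw [← add_div, ← add_div, div_mul_eq_mul_div, mul_div_assoc]
        ring_nf
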